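/- arXiv:1502.05967 — 3 statements merged into one kernel-verified Lean document; each statement's English description precedes it below -/
import Mathlib

section
/- Let (Ω, S, μ) be a finite measure space and F a measurable function. Suppose there are constants C > 0, r > 0 and an integer p_0 > 0 such that ‖F‖_{L^p(μ)} ≤ C p^r for every p ≥ p_0. Then for every 0 < δ < r e^{-1} there exists L = L(r, δ, p_0, μ(Ω)) < ∞ such that ∫_Ω exp[ δ (|F|/C)^{1/r} ] dμ ≤ L. -/
open MeasureTheory Real ENNReal

lemma aux_pow_fact (n : ℕ) : (n : ℝ) ^ n / n.factorial ≤ Real.exp n := by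
  refine le_trans ?_ (Real.sum_le_exp_of_nonneg (Nat.cast_nonneg n) (n + 1))
  exact Finset.single_le_sum (f := fun i => (n : ℝ) ^ i / i.factorial)
    (fun i _ => by positivity) (Finset.self_mem_range_succ n)

lemma aux_rpow_le (x a b : ℝ) (hx : 0 ≤ x) (ha : 0 ≤ a) (hab : a ≤ b) :
    x ^ a ≤ 1 + x ^ b := by
  rcases le_or_gt x 1 with h | h
  · exact le_trans (Real.rpow_le_one hx h ha) (le_add_of_nonneg_right (Real.rpow_nonneg hx b))
  · exact le_trans (Real.rpow_le_rpow_of_exponent_le h.le hab)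
      (le_add_of_nonneg_left zero_le_one)

lemma aux_exp_tsum (x : ℝ) : Real.exp x = ∑' n : ℕ, x ^ n / n.factorial := by
  rw [Real.exp_eq_exp_ℝ, NormedSpace.exp_eq_tsum_div]

lemma aux_moment {Ω : Type} [MeasurableSpace Ω] (μ : Measure Ω) (F : Ω → ℝ)
    (hF : Measurable F) (C : ℝ) (hC : 0 < C) (r p : ℝ) (hp : 0 < p)
    (h : (∫⁻ ω, ENNReal.ofReal (|F ω| ^ p) ∂μ) ^ (1 / p) ≤ ENNReal.ofReal (C * p ^ r)) :
    ∫⁻ ω, ENNReal.ofReal ((|F ω| / C) ^ p) ∂μ ≤ ENNReal.ofReal (p ^ (r * p)) := by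
  have h1 : ∫⁻ ω, ENNReal.ofReal (|F ω| ^ p) ∂μ ≤ ENNReal.ofReal (C * p ^ r) ^ p := by
    have h2 := ENNReal.rpow_le_rpow h hp.le
    rwa [← ENNReal.rpow_mul, one_div_mul_cancel hp.ne', ENNReal.rpow_one] at h2
  have hCp : (0:ℝ) < C ^ p := Real.rpow_pos_of_pos hC p
  calc ∫⁻ ω, ENNReal.ofReal ((|F ω| / C) ^ p) ∂μ
      = (∫⁻ ω, ENNReal.ofReal (|F ω| ^ p) ∂μ) * (ENNReal.ofReal (C ^ p))⁻¹ := by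
        rw [← lintegral_mul_const _ ((hF.abs.pow measurable_const).ennreal_ofReal)]
        congr 1; ext ω
        rw [Real.div_rpow (abs_nonneg _) hC.le, ENNReal.ofReal_div_of_pos hCp,
          div_eq_mul_inv]
    _ ≤ ENNReal.ofReal (C * p ^ r) ^ p * (ENNReal.ofReal (C ^ p))⁻¹ :=
        mul_le_mul_left h1 _
    _ = ENNReal.ofReal (p ^ (r * p)) := by
        rw [ENNReal.ofReal_rpow_of_pos (by positivity),
          Real.mul_rpow hC.le (Real.rpow_nonneg hp.le r), ← Real.rpow_mul hp.le,
          ENNReal.ofReal_mul hCp.le, mul_comm (ENNReal.ofReal (C ^ p)), mul_assoc,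
          ENNReal.mul_inv_cancel (ENNReal.ofReal_pos.2 hCp).ne' ENNReal.ofReal_ne_top,
          mul_one]

/-- Lemma 5.1 (after Tzvetkov): if `‖F‖_{L^p(μ)} ≤ C p^r` for all `p ≥ p₀`, then
`∫ exp(δ (|F|/C)^{1/r}) dμ ≤ L` for every `0 < δ < r/e`, with `L` depending only on
`r`, `δ`, `p₀` and the total mass `V` of the finite measure `μ`. -/
theorem exp_moment_from_Lp_growth (r δ : ℝ) (hr : 0 < r) (hδ0 : 0 < δ)
    (hδ : δ < r * Real.exp (-1)) (p₀ : ℕ) (hp₀ : 0 < p₀) (V : ℝ≥0∞) (hV : V ≠ ∞) :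
    ∃ L : ℝ≥0∞, L ≠ ∞ ∧
      ∀ (Ω : Type) (_ : MeasurableSpace Ω) (μ : Measure Ω), μ Set.univ = V →
        ∀ (F : Ω → ℝ), Measurable F →
          ∀ C : ℝ, 0 < C →
            (∀ p : ℝ, (p₀ : ℝ) ≤ p →
              (∫⁻ ω, ENNReal.ofReal (|F ω| ^ p) ∂μ) ^ (1 / p) ≤
                ENNReal.ofReal (C * p ^ r)) →
            (∫⁻ ω, ENNReal.ofReal (Real.exp (δ * (|F ω| / C) ^ (1 / r))) ∂μ) ≤ L := by
  set q : ℝ := δ * Real.exp 1 / r with hq_def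
  have hq0 : 0 ≤ q := by positivity
  have hq1 : q < 1 := by
    rw [hq_def, div_lt_one hr]
    rw [Real.exp_neg] at hδ
    calc δ * Real.exp 1 < r * (Real.exp 1)⁻¹ * Real.exp 1 :=
          mul_lt_mul_of_pos_right hδ (Real.exp_pos 1)
      _ = r := by field_simp
  set K : ℝ := (p₀ : ℝ) ^ (r * (p₀ : ℝ)) with hK
  refine ⟨ENNReal.ofReal (Real.exp δ) * (V + ENNReal.ofReal K) +
      ENNReal.ofReal ((1 - q)⁻¹), ?_, ?_⟩
  · exact ENNReal.add_ne_top.2 ⟨ENNReal.mul_ne_top ENNReal.ofReal_ne_top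
      (ENNReal.add_ne_top.2 ⟨hV, ENNReal.ofReal_ne_top⟩), ENNReal.ofReal_ne_top⟩
  intro Ω _ μ hμ F hF C hC hyp
  set G : Ω → ℝ := fun ω => (|F ω| / C) ^ (1 / r) with hG
  have hG0 : ∀ ω, 0 ≤ G ω := fun ω => Real.rpow_nonneg (by positivity) _
  have hGm : Measurable G := (hF.abs.div_const C).pow measurable_const
  have hmeas : ∀ n : ℕ, Measurable fun ω =>
      ENNReal.ofReal ((δ * G ω) ^ n / n.factorial) := fun n =>
    (((measurable_const.mul hGm).pow_const n).div_const _).ennreal_ofReal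
  have step1 : (∫⁻ ω, ENNReal.ofReal (Real.exp (δ * G ω)) ∂μ)
      = ∑' n : ℕ, ∫⁻ ω, ENNReal.ofReal ((δ * G ω) ^ n / n.factorial) ∂μ := by
    rw [← lintegral_tsum (fun n => (hmeas n).aemeasurable)]
    congr 1; ext ω
    rw [aux_exp_tsum (δ * G ω), ENNReal.ofReal_tsum_of_nonneg
      (fun n => by have := hG0 ω; positivity) (Real.summable_pow_div_factorial _)]
  have key : ∀ n : ℕ, ∫⁻ ω, ENNReal.ofReal (G ω ^ n) ∂μ ≤
      V + ENNReal.ofReal K + ENNReal.ofReal (((n : ℝ) / r) ^ n) := by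
    intro n
    rcases Nat.eq_zero_or_pos n with hn | hn
    · subst hn
      simp only [pow_zero, ENNReal.ofReal_one, lintegral_one, hμ]
      exact le_trans le_self_add le_self_add
    · have hGpow : ∀ ω, G ω ^ n = (|F ω| / C) ^ ((n : ℝ) / r) := by
        intro ω
        rw [hG, ← Real.rpow_natCast ((|F ω| / C) ^ (1 / r)) n,
          ← Real.rpow_mul (by positivity)]
        congr 1; field_simp
      rcases le_or_gt (p₀ : ℝ) ((n : ℝ) / r) with hcase | hcase
      · have hb := aux_moment μ F hF C hC r ((n : ℝ) / r)
          (div_pos (by exact_mod_cast hn) hr) (hyp _ hcase)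
        calc ∫⁻ ω, ENNReal.ofReal (G ω ^ n) ∂μ
            = ∫⁻ ω, ENNReal.ofReal ((|F ω| / C) ^ ((n : ℝ) / r)) ∂μ := by
              simp_rw [hGpow]
          _ ≤ ENNReal.ofReal (((n : ℝ) / r) ^ (r * ((n : ℝ) / r))) := hb
          _ = ENNReal.ofReal (((n : ℝ) / r) ^ n) := by
              rw [show r * ((n : ℝ) / r) = (n : ℝ) by field_simp, Real.rpow_natCast]
          _ ≤ _ := le_add_self
      · have hb := aux_moment μ F hF C hC r (p₀ : ℝ)
          (by exact_mod_cast hp₀) (hyp _ le_rfl)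
        calc ∫⁻ ω, ENNReal.ofReal (G ω ^ n) ∂μ
            ≤ ∫⁻ ω, (1 + ENNReal.ofReal ((|F ω| / C) ^ (p₀ : ℝ))) ∂μ := by
              refine lintegral_mono fun ω => ?_
              rw [hGpow ω, ← ENNReal.ofReal_one,
                ← ENNReal.ofReal_add zero_le_one (Real.rpow_nonneg (by positivity) _)]
              exact ENNReal.ofReal_le_ofReal
                (aux_rpow_le _ _ _ (by positivity) (by positivity) hcase.le)
          _ = μ Set.univ + ∫⁻ ω, ENNReal.ofReal ((|F ω| / C) ^ (p₀ : ℝ)) ∂μ := by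
              rw [lintegral_add_left measurable_const, lintegral_one]
          _ ≤ V + ENNReal.ofReal K := by rw [hμ]; exact add_le_add_right hb V
          _ ≤ _ := le_self_add
  have term_bound : ∀ n : ℕ,
      ∫⁻ ω, ENNReal.ofReal ((δ * G ω) ^ n / n.factorial) ∂μ ≤
        ENNReal.ofReal (δ ^ n / n.factorial) * (V + ENNReal.ofReal K) +
          ENNReal.ofReal (q ^ n) := by
    intro n
    have h1 : ∀ ω, ENNReal.ofReal ((δ * G ω) ^ n / n.factorial) =
        ENNReal.ofReal (δ ^ n / n.factorial) * ENNReal.ofReal (G ω ^ n) := by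
      intro ω
      rw [← ENNReal.ofReal_mul (by positivity)]
      congr 1; rw [mul_pow]; ring
    simp_rw [h1]
    rw [lintegral_const_mul _ ((hGm.pow_const n).ennreal_ofReal)]
    calc ENNReal.ofReal (δ ^ n / n.factorial) * ∫⁻ ω, ENNReal.ofReal (G ω ^ n) ∂μ
        ≤ ENNReal.ofReal (δ ^ n / n.factorial) *
            (V + ENNReal.ofReal K + ENNReal.ofReal (((n : ℝ) / r) ^ n)) :=
          mul_le_mul_right (key n) _
      _ = ENNReal.ofReal (δ ^ n / n.factorial) * (V + ENNReal.ofReal K) +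
            ENNReal.ofReal (δ ^ n / n.factorial) * ENNReal.ofReal (((n : ℝ) / r) ^ n) := by
          rw [mul_add]
      _ ≤ _ := by
          refine add_le_add_right ?_ _
          rw [← ENNReal.ofReal_mul (by positivity)]
          refine ENNReal.ofReal_le_ofReal ?_
          calc δ ^ n / n.factorial * ((n : ℝ) / r) ^ n
              = (δ / r) ^ n * ((n : ℝ) ^ n / n.factorial) := by
                rw [div_pow, div_pow]; ring
            _ ≤ (δ / r) ^ n * Real.exp n :=
                mul_le_mul_of_nonneg_left (aux_pow_fact n) (by positivity)
            _ = q ^ n := by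
                rw [show Real.exp (n : ℝ) = Real.exp 1 ^ n by
                    rw [← Real.exp_nat_mul]; norm_num, ← mul_pow, hq_def]
                congr 1; ring
  calc (∫⁻ ω, ENNReal.ofReal (Real.exp (δ * G ω)) ∂μ)
      = ∑' n : ℕ, ∫⁻ ω, ENNReal.ofReal ((δ * G ω) ^ n / n.factorial) ∂μ := step1
    _ ≤ ∑' n : ℕ, (ENNReal.ofReal (δ ^ n / n.factorial) * (V + ENNReal.ofReal K) +
          ENNReal.ofReal (q ^ n)) := ENNReal.tsum_le_tsum term_bound
    _ = (∑' n : ℕ, ENNReal.ofReal (δ ^ n / n.factorial)) * (V + ENNReal.ofReal K) +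
          ∑' n : ℕ, ENNReal.ofReal (q ^ n) := by
        rw [ENNReal.tsum_add, ENNReal.tsum_mul_right]
    _ = ENNReal.ofReal (Real.exp δ) * (V + ENNReal.ofReal K) +
          ENNReal.ofReal ((1 - q)⁻¹) := by
        rw [← ENNReal.ofReal_tsum_of_nonneg (fun n => by positivity)
            (Real.summable_pow_div_factorial δ), ← aux_exp_tsum δ,
          ← ENNReal.ofReal_tsum_of_nonneg (fun n => by positivity)
            (summable_geometric_of_lt_one hq0 hq1),
          tsum_geometric_of_lt_one hq0 hq1]
end

section
/- Let k ≥ 0 and let γ_k be the Gaussian measure on L^2(T) induced by independent complex Gaussian Fourier coefficients ψ_n with variance (1+n^{2k})^{-1}. For every s ≥ k − 1/2, γ_k(Ḣ^s(T)) = 0; more precisely, for every λ > 0, γ_k(‖ψ_N‖_{Ḣ^s} ≤ λ) → 0 as N → ∞. -/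
open MeasureTheory ProbabilityTheory Real
open scoped NNReal ENNReal

/-- The centered complex Gaussian measure on `ℂ` with `E|ψ|² = v`. -/
noncomputable def complexGaussian (v : ℝ≥0) : Measure ℂ :=
  ((gaussianReal 0 (v / 2)).prod (gaussianReal 0 (v / 2))).map
    (fun p => (p.1 : ℂ) + p.2 * Complex.I)

/-- `γ` is the Gaussian measure `γ_k` with covariance `(I + (−Δ)^k)⁻¹`:
independent complex Gaussian Fourier coefficients with `E|ψ_n|² = (1+n^{2k})⁻¹`. -/
def IsGammaK (k : ℕ) (γ : Measure (ℤ → ℂ)) : Prop :=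
  IsProbabilityMeasure γ ∧
    iIndepFun (fun (n : ℤ) (ψ : ℤ → ℂ) => ψ n) γ ∧
    ∀ n : ℤ, γ.map (fun ψ => ψ n) =
      complexGaussian ((1 + (n : ℝ) ^ (2 * k))⁻¹).toNNReal

/-- Squared truncated homogeneous `Ḣ^s` norm: `Σ_{|n|≤N} |n|^{2s} |ψ_n|²`. -/
noncomputable def hsNormTruncSq (s : ℝ) (N : ℕ) (ψ : ℤ → ℂ) : ℝ :=
  ∑ n ∈ Finset.Icc (-(N:ℤ)) N, |(n : ℝ)| ^ (2 * s) * ‖ψ n‖ ^ 2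

/-! ### Auxiliary lemmas -/

lemma aux_integral_exp_neg_mul_sq_gaussianReal (v : ℝ≥0) {a : ℝ} (ha : 0 ≤ a) :
    ∫ x : ℝ, Real.exp (-(a * x ^ 2)) ∂(gaussianReal 0 v) = (Real.sqrt (1 + 2 * a * v))⁻¹ := by
  rcases eq_or_ne v 0 with hv | hv
  · simp [hv, gaussianReal_zero_var]
  · have hv' : (0:ℝ) < (v:ℝ) := by positivity
    rw [gaussianReal_of_var_ne_zero _ hv]
    have hd : gaussianPDF 0 v
        = fun x => ((Real.toNNReal (gaussianPDFReal 0 v x) : ℝ≥0) : ℝ≥0∞) := rfl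
    rw [hd, integral_withDensity_eq_integral_smul
      ((measurable_gaussianPDFReal 0 v).real_toNNReal) _]
    have hpt : ∀ x : ℝ, (Real.toNNReal (gaussianPDFReal 0 v x) : ℝ≥0)
          • Real.exp (-(a * x ^ 2))
        = (Real.sqrt (2 * π * v))⁻¹ * Real.exp (-(a + (2*(v:ℝ))⁻¹) * x ^ 2) := by
      intro x
      rw [NNReal.smul_def, Real.coe_toNNReal _ (gaussianPDFReal_nonneg 0 v x),
        gaussianPDFReal, sub_zero, smul_eq_mul, mul_assoc, ← Real.exp_add]
      congr 1
      field_simp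
      ring
    simp_rw [hpt]
    rw [integral_const_mul, integral_gaussian]
    have hb : (0:ℝ) < a + (2*(v:ℝ))⁻¹ := by positivity
    rw [show ((√(2 * π * (v:ℝ)))⁻¹ : ℝ) = √((2 * π * (v:ℝ))⁻¹) from (Real.sqrt_inv _).symm,
      ← Real.sqrt_mul (by positivity),
      show ((√(1 + 2 * a * (v:ℝ)))⁻¹ : ℝ) = √((1 + 2 * a * (v:ℝ))⁻¹) from (Real.sqrt_inv _).symm]
    congr 1
    have hπ : (0:ℝ) < π := Real.pi_pos
    field_simp
    ring

lemma aux_integral_exp_neg_mul_normSq_complexGaussian (v : ℝ≥0) {a : ℝ} (ha : 0 ≤ a) :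
    ∫ z : ℂ, Real.exp (-(a * ‖z‖ ^ 2)) ∂(complexGaussian v) = (1 + a * v)⁻¹ := by
  have hmeas : Measurable (fun p : ℝ × ℝ => (p.1 : ℂ) + p.2 * Complex.I) := by fun_prop
  have hsm : AEStronglyMeasurable (fun z : ℂ => Real.exp (-(a * ‖z‖ ^ 2)))
      (((gaussianReal 0 (v / 2)).prod (gaussianReal 0 (v / 2))).map
        (fun p => (p.1 : ℂ) + p.2 * Complex.I)) := by
    apply Continuous.aestronglyMeasurable; fun_prop
  rw [complexGaussian, integral_map hmeas.aemeasurable hsm]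
  have hnorm : ∀ p : ℝ × ℝ, Real.exp (-(a * ‖(p.1 : ℂ) + p.2 * Complex.I‖ ^ 2))
      = Real.exp (-(a * p.1 ^ 2)) * Real.exp (-(a * p.2 ^ 2)) := by
    intro p
    rw [Complex.norm_add_mul_I, Real.sq_sqrt (by positivity),
      ← Real.exp_add]
    congr 1
    ring
  simp_rw [hnorm]
  rw [integral_prod_mul (f := fun y : ℝ => Real.exp (-(a * y ^ 2)))
    (g := fun y : ℝ => Real.exp (-(a * y ^ 2))),
    aux_integral_exp_neg_mul_sq_gaussianReal _ ha]
  have hc : ((v / 2 : ℝ≥0) : ℝ) = (v : ℝ) / 2 := by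
    rw [NNReal.coe_div, NNReal.coe_two]
  rw [hc]
  have h2 : 2 * a * ((v:ℝ) / 2) = a * v := by ring
  rw [h2, ← mul_inv, Real.mul_self_sqrt (by positivity)]

lemma aux_integral_coord (k : ℕ) (γ : Measure (ℤ → ℂ)) (hγ : IsGammaK k γ) (n : ℤ)
    {a : ℝ} (ha : 0 ≤ a) :
    ∫ ψ : ℤ → ℂ, Real.exp (-(a * ‖ψ n‖ ^ 2)) ∂γ
      = (1 + a * (1 + (n : ℝ) ^ (2 * k))⁻¹)⁻¹ := by
  have hpow : (0:ℝ) < 1 + (n : ℝ) ^ (2 * k) := by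
    have : (0:ℝ) ≤ (n : ℝ) ^ (2 * k) := by
      rw [pow_mul]; exact pow_nonneg (sq_nonneg _) k
    linarith
  have hsm : AEStronglyMeasurable (fun z : ℂ => Real.exp (-(a * ‖z‖ ^ 2)))
      (γ.map (fun ψ => ψ n)) := by
    apply Continuous.aestronglyMeasurable; fun_prop
  have hmap := integral_map (μ := γ) (measurable_pi_apply n).aemeasurable hsm
  rw [← hmap, hγ.2.2 n,
    aux_integral_exp_neg_mul_normSq_complexGaussian _ ha,
    Real.coe_toNNReal _ (le_of_lt (inv_pos.mpr hpow))]


lemma aux_one_add_sum_le_prod {ι : Type*} (F : Finset ι) (f : ι → ℝ)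
    (hf : ∀ i ∈ F, 0 ≤ f i) : 1 + ∑ i ∈ F, f i ≤ ∏ i ∈ F, (1 + f i) := by
  classical
  revert hf
  induction F using Finset.induction_on with
  | empty => intro _; simp
  | @insert a F ha ih =>
    intro hf
    rw [Finset.sum_insert ha, Finset.prod_insert ha]
    have h1 : 0 ≤ f a := hf a (Finset.mem_insert_self _ _)
    have h2 : ∀ i ∈ F, 0 ≤ f i := fun i hi => hf i (Finset.mem_insert.mpr (Or.inr hi))
    have hsums : 0 ≤ ∑ i ∈ F, f i := Finset.sum_nonneg h2
    have h3 := ih h2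
    nlinarith [mul_le_mul_of_nonneg_left h3 (by linarith : (0:ℝ) ≤ 1 + f a)]

lemma aux_sum_Icc (g : ℤ → ℝ) (N : ℕ) :
    ∑ n ∈ Finset.Icc (1:ℤ) (N:ℤ), g n = ∑ i ∈ Finset.range N, g ((i:ℤ)+1) := by
  induction N with
  | zero => simp
  | succ m ih =>
    have hins : Finset.Icc (1:ℤ) (((m+1:ℕ):ℤ)) = insert ((m:ℤ)+1) (Finset.Icc 1 (m:ℤ)) := by
      ext x
      simp only [Finset.mem_Icc, Finset.mem_insert]
      omega
    rw [Finset.sum_range_succ, ← ih, hins,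
      Finset.sum_insert (by simp only [Finset.mem_Icc]; omega)]
    ring

lemma aux_trunc_bound (k : ℕ) (γ : Measure (ℤ → ℂ)) (hγ : IsGammaK k γ) (s : ℝ) (l : ℝ)
    (N : ℕ) :
    (γ {ψ | hsNormTruncSq s N ψ ≤ l ^ 2}).toReal
      ≤ Real.exp (l ^ 2) *
        ∏ n ∈ Finset.Icc (-(N:ℤ)) N, (1 + |(n:ℝ)| ^ (2*s) * (1 + (n:ℝ) ^ (2*k))⁻¹)⁻¹ := by
  haveI := hγ.1
  set X : ℤ → (ℤ → ℂ) → ℝ := fun n ψ => |(n:ℝ)| ^ (2*s) * ‖ψ n‖ ^ 2 with hX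
  have hXmeas : ∀ n, Measurable (X n) := by
    intro n
    exact (((measurable_pi_apply n).norm.pow measurable_const).const_mul _)
  have hXnn : ∀ n ψ, 0 ≤ X n ψ := fun n ψ =>
    mul_nonneg (Real.rpow_nonneg (abs_nonneg _) _) (sq_nonneg _)
  have hSfun : hsNormTruncSq s N = ∑ n ∈ Finset.Icc (-(N:ℤ)) N, X n := by
    ext ψ
    rw [Finset.sum_apply]
    rfl
  have hSmeas : Measurable (hsNormTruncSq s N) :=
    Finset.measurable_sum _ fun i _ => hXmeas i
  have hSnn : ∀ ψ, 0 ≤ hsNormTruncSq s N ψ := fun ψ =>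
    Finset.sum_nonneg fun n _ => hXnn n ψ
  have hindep : iIndepFun X γ :=
    hγ.2.1.comp (fun n z => |(n:ℝ)| ^ (2*s) * ‖z‖ ^ 2)
      (fun n => ((measurable_norm.pow measurable_const).const_mul _))
  have hmgf : mgf (hsNormTruncSq s N) γ (-1)
      = ∏ n ∈ Finset.Icc (-(N:ℤ)) N, mgf (X n) γ (-1) := by
    rw [hSfun]
    exact hindep.mgf_sum hXmeas _
  have hmgf_coord : ∀ n : ℤ, mgf (X n) γ (-1)
      = (1 + |(n:ℝ)| ^ (2*s) * (1 + (n:ℝ) ^ (2*k))⁻¹)⁻¹ := by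
    intro n
    rw [mgf]
    have hpt : ∀ ψ : ℤ → ℂ, Real.exp (-1 * X n ψ)
        = Real.exp (-( |(n:ℝ)| ^ (2*s) * ‖ψ n‖ ^ 2)) := by
      intro ψ
      rw [neg_one_mul]
    simp_rw [hpt]
    exact aux_integral_coord k γ hγ n (Real.rpow_nonneg (abs_nonneg _) _)
  have hE : Integrable (fun ψ => Real.exp (-hsNormTruncSq s N ψ)) γ := by
    refine Integrable.mono' (integrable_const 1)
      (Real.measurable_exp.comp hSmeas.neg).aestronglyMeasurable
      (ae_of_all _ fun ψ => ?_)
    rw [Real.norm_eq_abs, abs_of_pos (Real.exp_pos _)]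
    exact Real.exp_le_one_iff.mpr (neg_nonpos.mpr (hSnn ψ))
  have hA : MeasurableSet {ψ : ℤ → ℂ | hsNormTruncSq s N ψ ≤ l ^ 2} :=
    measurableSet_le hSmeas measurable_const
  have hchain : Real.exp (-(l^2)) * (γ {ψ | hsNormTruncSq s N ψ ≤ l ^ 2}).toReal
      ≤ mgf (hsNormTruncSq s N) γ (-1) := by
    have h1 : ∫ ψ in {ψ : ℤ → ℂ | hsNormTruncSq s N ψ ≤ l ^ 2}, Real.exp (-(l^2)) ∂γ
        = (γ {ψ | hsNormTruncSq s N ψ ≤ l ^ 2}).toReal * Real.exp (-(l^2)) := by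
      rw [setIntegral_const, smul_eq_mul, measureReal_def]
    have h2 : ∫ ψ in {ψ : ℤ → ℂ | hsNormTruncSq s N ψ ≤ l ^ 2}, Real.exp (-(l^2)) ∂γ
        ≤ ∫ ψ in {ψ : ℤ → ℂ | hsNormTruncSq s N ψ ≤ l ^ 2},
            Real.exp (-hsNormTruncSq s N ψ) ∂γ := by
      refine setIntegral_mono_on (integrable_const _).integrableOn hE.integrableOn hA
        fun ψ hψ => ?_
      exact Real.exp_le_exp.mpr (neg_le_neg hψ)
    have h3 : ∫ ψ in {ψ : ℤ → ℂ | hsNormTruncSq s N ψ ≤ l ^ 2},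
          Real.exp (-hsNormTruncSq s N ψ) ∂γ
        ≤ ∫ ψ, Real.exp (-hsNormTruncSq s N ψ) ∂γ :=
      setIntegral_le_integral hE (ae_of_all _ fun ψ => (Real.exp_pos _).le)
    have h4 : ∫ ψ, Real.exp (-hsNormTruncSq s N ψ) ∂γ = mgf (hsNormTruncSq s N) γ (-1) := by
      rw [mgf]
      simp_rw [neg_one_mul]
    linarith
  rw [hmgf] at hchain
  simp_rw [hmgf_coord] at hchain
  calc (γ {ψ | hsNormTruncSq s N ψ ≤ l ^ 2}).toReal
      = Real.exp (l^2) * (Real.exp (-(l^2))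
          * (γ {ψ | hsNormTruncSq s N ψ ≤ l ^ 2}).toReal) := by
        rw [← mul_assoc, ← Real.exp_add]
        simp
    _ ≤ Real.exp (l^2) * ∏ n ∈ Finset.Icc (-(N:ℤ)) N,
          (1 + |(n:ℝ)| ^ (2*s) * (1 + (n:ℝ) ^ (2*k))⁻¹)⁻¹ :=
        mul_le_mul_of_nonneg_left hchain (Real.exp_nonneg _)

/-- The Gaussian measure `γ_k` gives no mass to `Ḣ^s` for `s ≥ k − 1/2`:
the set of `ψ` with `Σ_n |n|^{2s}|ψ_n|² < ∞` is `γ_k`-null, and more precisely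
`γ_k(‖ψ_N‖_{Ḣ^s} ≤ λ) → 0` as `N → ∞` for every `λ > 0`. -/
theorem gammaK_null_Hs (k : ℕ) (γ : Measure (ℤ → ℂ)) (hγ : IsGammaK k γ)
    (s : ℝ) (hs : (k : ℝ) - 1 / 2 ≤ s) :
    γ {ψ : ℤ → ℂ | Summable (fun n : ℤ => |(n : ℝ)| ^ (2 * s) * ‖ψ n‖ ^ 2)} = 0 ∧
    ∀ l : ℝ, 0 < l →
      Filter.Tendsto (fun N : ℕ => γ {ψ | Real.sqrt (hsNormTruncSq s N ψ) ≤ l})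
        Filter.atTop (nhds 0) := by
  have key : ∀ l : ℝ, 0 < l →
      Filter.Tendsto (fun N : ℕ => γ {ψ | Real.sqrt (hsNormTruncSq s N ψ) ≤ l})
        Filter.atTop (nhds 0) := by
    intro l hl
    haveI := hγ.1
    have hset : ∀ N : ℕ, {ψ : ℤ → ℂ | Real.sqrt (hsNormTruncSq s N ψ) ≤ l}
        = {ψ | hsNormTruncSq s N ψ ≤ l ^ 2} := by
      intro N
      ext ψ
      simp only [Set.mem_setOf_eq, Real.sqrt_le_iff, hl.le, true_and]
    -- lower bound on the summands for 1 ≤ n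
    have hlow : ∀ N : ℕ, ∀ n ∈ Finset.Icc (1:ℤ) (N:ℤ),
        (2 * (n:ℝ))⁻¹ ≤ |(n:ℝ)| ^ (2*s) * (1 + (n:ℝ) ^ (2*k))⁻¹ := by
      intro N n hn
      have hn1 : (1:ℤ) ≤ n := (Finset.mem_Icc.mp hn).1
      have hm : (1:ℝ) ≤ (n:ℝ) := by exact_mod_cast hn1
      have hm0 : (0:ℝ) < (n:ℝ) := by linarith
      have habs : |(n:ℝ)| = (n:ℝ) := abs_of_pos hm0
      set c : ℝ := (n:ℝ) ^ (2*k) with hc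
      have hc1 : (1:ℝ) ≤ c := by
        calc (1:ℝ) = 1 ^ (2*k) := (one_pow _).symm
          _ ≤ (n:ℝ) ^ (2*k) := pow_le_pow_left₀ zero_le_one hm _
      have h1 : c / (n:ℝ) ≤ |(n:ℝ)| ^ (2*s) := by
        rw [habs]
        have he : c / (n:ℝ) = (n:ℝ) ^ (((2*k : ℕ):ℝ)) / (n:ℝ) ^ (1:ℝ) := by
          rw [Real.rpow_natCast, Real.rpow_one]
        rw [he, ← Real.rpow_sub hm0]
        apply Real.rpow_le_rpow_of_exponent_le hm
        push_cast
        linarith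
      have h2 : (2*c)⁻¹ ≤ (1+c)⁻¹ := inv_anti₀ (by linarith) (by linarith)
      calc (2*(n:ℝ))⁻¹ = (c / (n:ℝ)) * (2*c)⁻¹ := by
            field_simp
        _ ≤ |(n:ℝ)| ^ (2*s) * (1+c)⁻¹ :=
            mul_le_mul h1 h2 (by positivity) (Real.rpow_nonneg (abs_nonneg _) _)
    have htnn : ∀ n : ℤ, 0 ≤ |(n:ℝ)| ^ (2*s) * (1 + (n:ℝ) ^ (2*k))⁻¹ := by
      intro n
      have : (0:ℝ) ≤ (n:ℝ) ^ (2*k) := by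
        rw [pow_mul]
        exact pow_nonneg (sq_nonneg _) k
      have h0 : (0:ℝ) < 1 + (n:ℝ) ^ (2*k) := by linarith
      exact mul_nonneg (Real.rpow_nonneg (abs_nonneg _) _) (inv_pos.mpr h0).le
    -- bound the product by the harmonic-type sum
    have hub : ∀ N : ℕ, γ {ψ : ℤ → ℂ | hsNormTruncSq s N ψ ≤ l ^ 2}
        ≤ ENNReal.ofReal (Real.exp (l^2)
            * (1 + ∑ i ∈ Finset.range N, (2 * ((i:ℝ)+1))⁻¹)⁻¹) := by
      intro N
      have hb := aux_trunc_bound k γ hγ s l N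
      have hsum0 : 0 ≤ ∑ i ∈ Finset.range N, (2 * ((i:ℝ)+1))⁻¹ :=
        Finset.sum_nonneg fun i _ => by positivity
      have hprod : ∏ n ∈ Finset.Icc (-(N:ℤ)) N, (1 + |(n:ℝ)| ^ (2*s) * (1 + (n:ℝ) ^ (2*k))⁻¹)⁻¹
          ≤ (1 + ∑ i ∈ Finset.range N, (2 * ((i:ℝ)+1))⁻¹)⁻¹ := by
        rw [Finset.prod_inv_distrib]
        apply inv_anti₀ (by linarith)
        have hs1 : ∑ i ∈ Finset.range N, (2 * ((i:ℝ)+1))⁻¹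
            = ∑ n ∈ Finset.Icc (1:ℤ) (N:ℤ), (2 * (n:ℝ))⁻¹ := by
          rw [aux_sum_Icc (fun n : ℤ => (2 * (n:ℝ))⁻¹) N]
          push_cast
          rfl
        have hs2 : ∑ n ∈ Finset.Icc (1:ℤ) (N:ℤ), (2 * (n:ℝ))⁻¹
            ≤ ∑ n ∈ Finset.Icc (1:ℤ) (N:ℤ), |(n:ℝ)| ^ (2*s) * (1 + (n:ℝ) ^ (2*k))⁻¹ :=
          Finset.sum_le_sum (hlow N)
        have hs3 : 1 + ∑ n ∈ Finset.Icc (1:ℤ) (N:ℤ), |(n:ℝ)| ^ (2*s) * (1 + (n:ℝ) ^ (2*k))⁻¹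
            ≤ ∏ n ∈ Finset.Icc (1:ℤ) (N:ℤ), (1 + |(n:ℝ)| ^ (2*s) * (1 + (n:ℝ) ^ (2*k))⁻¹) :=
          aux_one_add_sum_le_prod _ _ fun i _ => htnn i
        have hs4 : ∏ n ∈ Finset.Icc (1:ℤ) (N:ℤ), (1 + |(n:ℝ)| ^ (2*s) * (1 + (n:ℝ) ^ (2*k))⁻¹)
            ≤ ∏ n ∈ Finset.Icc (-(N:ℤ)) (N:ℤ), (1 + |(n:ℝ)| ^ (2*s) * (1 + (n:ℝ) ^ (2*k))⁻¹) := by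
          have hsub2 : Finset.Icc (1:ℤ) (N:ℤ) ⊆ Finset.Icc (-(N:ℤ)) (N:ℤ) := by
            intro x hx
            rw [Finset.mem_Icc] at hx ⊢
            omega
          rw [← Finset.prod_sdiff hsub2]
          have hone : (1:ℝ) ≤ ∏ n ∈ Finset.Icc (-(N:ℤ)) (N:ℤ) \ Finset.Icc (1:ℤ) (N:ℤ),
              (1 + |(n:ℝ)| ^ (2*s) * (1 + (n:ℝ) ^ (2*k))⁻¹) := by
            have h := Finset.prod_le_prod
              (s := Finset.Icc (-(N:ℤ)) (N:ℤ) \ Finset.Icc (1:ℤ) (N:ℤ))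
              (f := fun _ => (1:ℝ))
              (g := fun n : ℤ => 1 + |(n:ℝ)| ^ (2*s) * (1 + (n:ℝ) ^ (2*k))⁻¹)
              (fun i _ => zero_le_one) (fun i _ => by linarith [htnn i])
            simpa using h
          have hpos : 0 ≤ ∏ n ∈ Finset.Icc (1:ℤ) (N:ℤ),
              (1 + |(n:ℝ)| ^ (2*s) * (1 + (n:ℝ) ^ (2*k))⁻¹) :=
            Finset.prod_nonneg fun i _ => by linarith [htnn i]
          exact le_mul_of_one_le_left hpos hone
        linarith
      calc γ {ψ : ℤ → ℂ | hsNormTruncSq s N ψ ≤ l ^ 2}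
          = ENNReal.ofReal ((γ {ψ : ℤ → ℂ | hsNormTruncSq s N ψ ≤ l ^ 2}).toReal) :=
            (ENNReal.ofReal_toReal (measure_ne_top _ _)).symm
        _ ≤ ENNReal.ofReal (Real.exp (l^2)
              * (1 + ∑ i ∈ Finset.range N, (2 * ((i:ℝ)+1))⁻¹)⁻¹) :=
            ENNReal.ofReal_le_ofReal (hb.trans
              (mul_le_mul_of_nonneg_left hprod (Real.exp_nonneg _)))
    -- the upper bound tends to zero
    have hdiv : Filter.Tendsto
        (fun N : ℕ => 1 + ∑ i ∈ Finset.range N, (2 * ((i:ℝ)+1))⁻¹)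
        Filter.atTop Filter.atTop := by
      apply Filter.tendsto_atTop_add_const_left
      have heq : ∀ N : ℕ, ∑ i ∈ Finset.range N, (2 * ((i:ℝ)+1))⁻¹
          = 2⁻¹ * ∑ i ∈ Finset.range N, 1 / ((i:ℝ)+1) := by
        intro N
        rw [Finset.mul_sum]
        apply Finset.sum_congr rfl
        intro i _
        rw [mul_inv, one_div]
      simp_rw [heq]
      exact (tendsto_sum_range_one_div_nat_succ_atTop).const_mul_atTop (by norm_num)
    have hzero : Filter.Tendsto
        (fun N : ℕ => ENNReal.ofReal (Real.exp (l^2)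
          * (1 + ∑ i ∈ Finset.range N, (2 * ((i:ℝ)+1))⁻¹)⁻¹))
        Filter.atTop (nhds 0) := by
      have h1 : Filter.Tendsto
          (fun N : ℕ => Real.exp (l^2)
            * (1 + ∑ i ∈ Finset.range N, (2 * ((i:ℝ)+1))⁻¹)⁻¹)
          Filter.atTop (nhds 0) := by
        have := (tendsto_inv_atTop_zero.comp hdiv).const_mul (Real.exp (l^2))
        simpa using this
      have := ENNReal.tendsto_ofReal h1
      simpa using this
    simp_rw [hset]
    exact tendsto_of_tendsto_of_tendsto_of_le_of_le tendsto_const_nhds hzero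
      (fun N => zero_le) hub
  refine ⟨?_, key⟩
  have hterm_nn : ∀ (ψ : ℤ → ℂ) (n : ℤ), 0 ≤ |(n:ℝ)| ^ (2*s) * ‖ψ n‖ ^ 2 := fun ψ n =>
    mul_nonneg (Real.rpow_nonneg (abs_nonneg _) _) (sq_nonneg _)
  have hsub : {ψ : ℤ → ℂ | Summable (fun n : ℤ => |(n:ℝ)| ^ (2*s) * ‖ψ n‖ ^ 2)}
      ⊆ ⋃ m : ℕ, ⋂ N : ℕ, {ψ | Real.sqrt (hsNormTruncSq s N ψ) ≤ (m:ℝ)+1} := by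
    intro ψ hψ
    obtain ⟨m, hm⟩ := exists_nat_ge
      (Real.sqrt (∑' n : ℤ, |(n:ℝ)| ^ (2*s) * ‖ψ n‖ ^ 2))
    refine Set.mem_iUnion.mpr ⟨m, Set.mem_iInter.mpr fun N => ?_⟩
    have hle : hsNormTruncSq s N ψ ≤ ∑' n : ℤ, |(n:ℝ)| ^ (2*s) * ‖ψ n‖ ^ 2 :=
      Summable.sum_le_tsum _ (fun n _ => hterm_nn ψ n) hψ
    have : Real.sqrt (hsNormTruncSq s N ψ)
        ≤ Real.sqrt (∑' n : ℤ, |(n:ℝ)| ^ (2*s) * ‖ψ n‖ ^ 2) := Real.sqrt_le_sqrt hle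
    simp only [Set.mem_setOf_eq]
    linarith
  have hnull : ∀ m : ℕ,
      γ (⋂ N : ℕ, {ψ : ℤ → ℂ | Real.sqrt (hsNormTruncSq s N ψ) ≤ (m:ℝ)+1}) = 0 := by
    intro m
    have hl : (0:ℝ) < (m:ℝ)+1 := by positivity
    have htend := key ((m:ℝ)+1) hl
    have hle : ∀ N : ℕ,
        γ (⋂ M : ℕ, {ψ : ℤ → ℂ | Real.sqrt (hsNormTruncSq s M ψ) ≤ (m:ℝ)+1})
          ≤ γ {ψ | Real.sqrt (hsNormTruncSq s N ψ) ≤ (m:ℝ)+1} := fun N =>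
      measure_mono (Set.iInter_subset _ N)
    have h0 : γ (⋂ M : ℕ, {ψ : ℤ → ℂ | Real.sqrt (hsNormTruncSq s M ψ) ≤ (m:ℝ)+1}) ≤ 0 :=
      ge_of_tendsto' htend hle
    exact le_antisymm h0 zero_le
  exact measure_mono_null hsub (measure_iUnion_null hnull)
end

section
/- Let k ≥ 0 and γ_k the Gaussian measure with Fourier coefficients of variance (1+n^{2k})^{-1}. For every s < k − 1/2 there is a constant C such that for all λ > 0, γ_k(‖ψ‖_{Ḣ^s} ≥ λ) ≤ C e^{−λ/4}. Consequently γ_k is concentrated on ∩_{ε>0} Ḣ^{k−1/2−ε}(T), i.e. γ_k(∩_{ε>0} Ḣ^{k−1/2−ε}) = 1. -/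
open MeasureTheory ProbabilityTheory Real
open scoped NNReal ENNReal

lemma aux_one_div_le_exp {x : ℝ} (h0 : 0 ≤ x) (h : x ≤ 1/2) :
    1 / (1 - x) ≤ rexp (2 * x) := by
  have h1 : (0:ℝ) < 1 - x := by linarith
  have h2 : 1 / (1 - x) ≤ 1 + 2 * x := by
    rw [div_le_iff₀ h1]; nlinarith
  refine h2.trans ?_
  have := Real.add_one_le_exp (2 * x)
  linarith

lemma lintegral_exp_sq_gaussianReal (V : ℝ≥0) (hV : V ≠ 0) (c : ℝ) (h1 : 2 * c * (V : ℝ) < 1) :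
    ∫⁻ x, ENNReal.ofReal (rexp (c * x ^ 2)) ∂(gaussianReal 0 V) =
      ENNReal.ofReal (1 / Real.sqrt (1 - 2 * c * (V : ℝ))) := by
  have hVpos : (0:ℝ) < V := lt_of_le_of_ne V.coe_nonneg (by simpa [eq_comm] using hV)
  set b : ℝ := 1 / (2 * (V:ℝ)) - c with hb
  have hbpos : 0 < b := by
    rw [hb, sub_pos, lt_div_iff₀ (by positivity)]
    linarith
  have h2Vb : 2 * (V:ℝ) * b = 1 - 2 * c * V := by
    rw [hb]; field_simp
  rw [gaussianReal_of_var_ne_zero _ hV,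
    lintegral_withDensity_eq_lintegral_mul _ (measurable_gaussianPDF _ _)
      (by measurability)]
  have heq : ∀ x : ℝ, (gaussianPDF 0 V * fun x => ENNReal.ofReal (rexp (c * x ^ 2))) x
      = ENNReal.ofReal ((Real.sqrt (2 * π * V))⁻¹ * rexp (-b * x ^ 2)) := by
    intro x
    simp only [Pi.mul_apply, gaussianPDF, gaussianPDFReal]
    rw [← ENNReal.ofReal_mul (by positivity)]
    congr 1
    rw [mul_assoc, ← Real.exp_add]
    congr 2
    rw [hb]
    field_simp
    ring
  simp_rw [heq]
  rw [← ofReal_integral_eq_lintegral_ofReal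
      ((integrable_exp_neg_mul_sq hbpos).const_mul _)
      (Filter.Eventually.of_forall fun x => by positivity)]
  rw [MeasureTheory.integral_const_mul, integral_gaussian]
  congr 1
  rw [← h2Vb, show 2 * π * (V:ℝ) = π * (2 * V) by ring,
    Real.sqrt_mul pi_pos.le, Real.sqrt_div pi_pos.le,
    Real.sqrt_mul (by positivity : (0:ℝ) ≤ 2 * V)]
  have hsπ : 0 < Real.sqrt π := Real.sqrt_pos.mpr pi_pos
  have hsb : 0 < Real.sqrt b := Real.sqrt_pos.mpr hbpos
  have hs2V : 0 < Real.sqrt (2 * (V:ℝ)) := Real.sqrt_pos.mpr (by positivity)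
  field_simp

lemma measurable_complexMk : Measurable (fun p : ℝ × ℝ => (p.1 : ℂ) + p.2 * Complex.I) := by
  fun_prop

lemma lintegral_exp_sq_complexGaussian (v : ℝ≥0) (hv : v ≠ 0) (c : ℝ) (hc : 0 ≤ c)
    (h1 : c * (v : ℝ) < 1) :
    ∫⁻ z, ENNReal.ofReal (rexp (c * ‖z‖ ^ 2)) ∂(complexGaussian v) =
      ENNReal.ofReal (1 / (1 - c * (v : ℝ))) := by
  have hA : (0:ℝ) < 1 - c * v := by linarith
  have hV : (v / 2 : ℝ≥0) ≠ 0 := by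
    simp only [ne_eq, div_eq_zero_iff]
    push_neg
    exact ⟨hv, by norm_num⟩
  have hVr : ((v / 2 : ℝ≥0) : ℝ) = (v:ℝ) / 2 := by push_cast; ring
  have h2 : 2 * c * ((v / 2 : ℝ≥0) : ℝ) < 1 := by rw [hVr]; ring_nf; ring_nf at h1; linarith
  have hval : (1 : ℝ) - 2 * c * ((v / 2 : ℝ≥0) : ℝ) = 1 - c * v := by rw [hVr]; ring
  have hnorm : ∀ p : ℝ × ℝ, ‖(p.1 : ℂ) + (p.2 : ℂ) * Complex.I‖ ^ 2 = p.1 ^ 2 + p.2 ^ 2 := by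
    intro p
    rw [Complex.sq_norm, Complex.normSq_add_mul_I]
  rw [complexGaussian, lintegral_map (by fun_prop) measurable_complexMk]
  have hrw : ∀ p : ℝ × ℝ, ENNReal.ofReal (rexp (c * ‖(p.1 : ℂ) + (p.2:ℂ) * Complex.I‖ ^ 2))
      = ENNReal.ofReal (rexp (c * p.1 ^ 2)) * ENNReal.ofReal (rexp (c * p.2 ^ 2)) := by
    intro p
    rw [hnorm, mul_add, Real.exp_add, ENNReal.ofReal_mul (by positivity)]
  simp_rw [hrw]
  rw [lintegral_prod _ (by fun_prop)]
  simp_rw [lintegral_const_mul _ (by fun_prop : Measurable fun y : ℝ => ENNReal.ofReal (rexp (c * y ^ 2))),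
    lintegral_exp_sq_gaussianReal _ hV c h2, hval]
  rw [lintegral_mul_const _ (by fun_prop), lintegral_exp_sq_gaussianReal _ hV c h2, hval]
  rw [← ENNReal.ofReal_mul (by positivity)]
  congr 1
  rw [div_mul_div_comm, one_mul, Real.mul_self_sqrt hA.le]

lemma lintegral_prod_of_iIndepFun {Ω : Type*} [MeasurableSpace Ω] {μ : Measure Ω}
    [IsProbabilityMeasure μ] {ι : Type*} {F : ι → Ω → ℝ≥0∞}
    (hmeas : ∀ i, Measurable (F i))
    (hind : iIndepFun F μ) (S : Finset ι) :
    ∫⁻ ω, ∏ i ∈ S, F i ω ∂μ = ∏ i ∈ S, ∫⁻ ω, F i ω ∂μ := by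
  classical
  induction S using Finset.induction_on with
  | empty => simp
  | @insert a s ha ih =>
    simp_rw [Finset.prod_insert ha]
    rw [← ih]
    have hIndep : IndepFun (∏ j ∈ s, F j) (F a) μ :=
      hind.indepFun_finsetProd_of_notMem hmeas ha
    have hmp : Measurable (∏ j ∈ s, F j) := by
      rw [show (∏ j ∈ s, F j) = fun ω => ∏ j ∈ s, F j ω from funext fun ω => by
        simp [Finset.prod_apply]]
      exact Finset.measurable_prod s (fun i _ => hmeas i)
    have := lintegral_mul_eq_lintegral_mul_lintegral_of_indepFun hmp (hmeas a) hIndep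
    calc ∫⁻ ω, F a ω * ∏ j ∈ s, F j ω ∂μ
        = ∫⁻ ω, ((∏ j ∈ s, F j) * F a) ω ∂μ := by
          congr 1; ext ω; simp [Finset.prod_apply, mul_comm]
      _ = (∫⁻ ω, (∏ j ∈ s, F j) ω ∂μ) * ∫⁻ ω, F a ω ∂μ := this
      _ = (∫⁻ ω, ∏ j ∈ s, F j ω ∂μ) * ∫⁻ ω, F a ω ∂μ := by
          simp_rw [Finset.prod_apply]
      _ = (∫⁻ ω, F a ω ∂μ) * ∫⁻ ω, ∏ j ∈ s, F j ω ∂μ := mul_comm _ _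

lemma summable_of_le_off_zero {f g : ℤ → ℝ} (hg0 : ∀ n, 0 ≤ g n) (hf0 : ∀ n, 0 ≤ f n)
    (hf : Summable f) (h : ∀ n, n ≠ 0 → g n ≤ f n) : Summable g := by
  classical
  have h1 : Summable (fun n : ℤ => if n = 0 then 0 else g n) := by
    refine hf.of_nonneg_of_le (fun n => ?_) (fun n => ?_)
    · by_cases hn : n = 0 <;> simp [hn, hg0 n]
    · by_cases hn : n = 0 <;> simp [hn, hf0 0, h n]
  have h2 : Summable (fun n : ℤ => if n = 0 then g 0 else 0) :=
    summable_of_ne_finset_zero (s := {0}) (fun n hn => by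
      simp only [Finset.mem_singleton] at hn; simp [hn])
  exact (h1.add h2).congr fun n => by by_cases hn : n = 0 <;> simp [hn]

lemma gammaK_core (k : ℕ) (γ : Measure (ℤ → ℂ)) (hγ : IsGammaK k γ) (s : ℝ)
    (hs : s < (k : ℝ) - 1 / 2) :
    ∃ M : ℝ, 0 < M ∧ ∀ t : ℝ,
      γ {ψ : ℤ → ℂ | ∃ m : ℕ,
          t < ∑ n ∈ Finset.Icc (-(m:ℤ)) (m:ℤ), |(n : ℝ)| ^ (2 * s) * ‖ψ n‖ ^ 2}
        ≤ ENNReal.ofReal (M * rexp (-t / 4)) := by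
  obtain ⟨hprob, hindep, hlaw⟩ := hγ
  set a : ℤ → ℝ := fun n => |(n : ℝ)| ^ (2 * s) with ha_def
  set vr : ℤ → ℝ := fun n => (1 + (n : ℝ) ^ (2 * k))⁻¹ with hvr_def
  have hpow_nonneg : ∀ n : ℤ, 0 ≤ (n : ℝ) ^ (2 * k) := fun n => (even_two_mul k).pow_nonneg _
  have ha : ∀ n, 0 ≤ a n := fun n => Real.rpow_nonneg (abs_nonneg _) _
  have hvpos : ∀ n, 0 < vr n := fun n => by
    have := hpow_nonneg n
    rw [hvr_def]
    positivity
  have hv1 : ∀ n, vr n ≤ 1 := fun n => by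
    rw [hvr_def]
    exact inv_le_one_of_one_le₀ (by linarith [hpow_nonneg n])
  have hbound : ∀ n : ℤ, n ≠ 0 → a n * vr n ≤ |(n : ℝ)| ^ (-(2 * ((k:ℝ) - s))) := by
    intro n hn
    have h1n : (1:ℝ) ≤ |(n:ℝ)| := by
      have : (1:ℤ) ≤ |n| := Int.one_le_abs hn
      calc (1:ℝ) ≤ ((|n| : ℤ) : ℝ) := by exact_mod_cast this
        _ = |(n:ℝ)| := by push_cast; ring
    have h0n : (0:ℝ) < |(n:ℝ)| := by linarith
    have hpoweq : |(n:ℝ)| ^ ((2 * k : ℝ)) = (n:ℝ) ^ (2 * k) := by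
      rw [show ((2 * (k:ℝ))) = ((2 * k : ℕ) : ℝ) by push_cast; ring, Real.rpow_natCast,
        pow_abs, abs_of_nonneg (hpow_nonneg n)]
    have hvn : vr n ≤ |(n:ℝ)| ^ (-(2 * (k:ℝ))) := by
      rw [hvr_def, Real.rpow_neg (abs_nonneg _), hpoweq]
      exact inv_anti₀ (by rw [← hpoweq]; positivity) (by linarith [hpow_nonneg n])
    calc a n * vr n ≤ a n * |(n:ℝ)| ^ (-(2 * (k:ℝ))) :=
          mul_le_mul_of_nonneg_left hvn (ha n)
      _ = |(n:ℝ)| ^ (2 * s + -(2 * (k:ℝ))) := by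
          rw [ha_def, ← Real.rpow_add h0n]
      _ = |(n:ℝ)| ^ (-(2 * ((k:ℝ) - s))) := by ring_nf
  have hav : ∀ n, a n * vr n ≤ 1 := by
    intro n
    rcases eq_or_ne n 0 with h0 | h0
    · subst h0
      have ha0 : a 0 ≤ 1 := by
        rw [ha_def]
        simpa using Real.zero_rpow_le_one (2 * s)
      calc a 0 * vr 0 ≤ 1 * 1 :=
            mul_le_mul ha0 (hv1 0) (hvpos 0).le zero_le_one
        _ = 1 := mul_one 1
    · refine (hbound n h0).trans ?_
      refine Real.rpow_le_one_of_one_le_of_nonpos ?_ (by linarith)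
      have : (1:ℤ) ≤ |n| := Int.one_le_abs h0
      calc (1:ℝ) ≤ ((|n| : ℤ) : ℝ) := by exact_mod_cast this
        _ = |(n:ℝ)| := by push_cast; ring
  have hsummg := summable_abs_int_rpow (show (1:ℝ) < 2 * ((k:ℝ) - s) by linarith)
  have hsum : Summable (fun n => a n * vr n) :=
    summable_of_le_off_zero (fun n => mul_nonneg (ha n) (hvpos n).le)
      (fun n => Real.rpow_nonneg (abs_nonneg _) _) hsummg hbound
  set T : ℝ := ∑' n, a n * vr n with hT_def
  have hT0 : 0 ≤ T := tsum_nonneg (fun n => mul_nonneg (ha n) (hvpos n).le)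
  refine ⟨rexp (T / 2), Real.exp_pos _, fun t => ?_⟩
  -- measurability of factors
  have hFmeas : ∀ n : ℤ,
      Measurable (fun ψ : ℤ → ℂ => ENNReal.ofReal (rexp (a n / 4 * ‖ψ n‖ ^ 2))) := by
    intro n; fun_prop
  -- per-coordinate bound
  have hfac : ∀ n : ℤ, ∫⁻ ψ, ENNReal.ofReal (rexp (a n / 4 * ‖ψ n‖ ^ 2)) ∂γ
      ≤ ENNReal.ofReal (rexp (a n * vr n / 2)) := by
    intro n
    set vnn : ℝ≥0 := ((1 + (n : ℝ) ^ (2 * k))⁻¹).toNNReal with hvnn_def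
    have hvnn : (vnn : ℝ) = vr n := Real.coe_toNNReal _ (hvpos n).le
    have hvnn0 : vnn ≠ 0 := by
      have hp : (0:ℝ) < (vnn:ℝ) := by rw [hvnn]; exact hvpos n
      intro hcon
      rw [hcon] at hp
      simp at hp
    have hmapped : ∫⁻ ψ, ENNReal.ofReal (rexp (a n / 4 * ‖ψ n‖ ^ 2)) ∂γ
        = ∫⁻ z, ENNReal.ofReal (rexp (a n / 4 * ‖z‖ ^ 2)) ∂(complexGaussian vnn) := by
      rw [← hlaw n, lintegral_map (by fun_prop) (measurable_pi_apply n)]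
    have hcv : a n / 4 * (vnn : ℝ) < 1 := by
      rw [hvnn]
      nlinarith [hav n, ha n, (hvpos n).le]
    rw [hmapped, lintegral_exp_sq_complexGaussian vnn hvnn0 _ (div_nonneg (ha n) (by norm_num)) hcv]
    apply ENNReal.ofReal_le_ofReal
    rw [hvnn]
    have h2 := aux_one_div_le_exp (x := a n / 4 * vr n)
      (mul_nonneg (div_nonneg (ha n) (by norm_num)) (hvpos n).le) (by nlinarith [hav n])
    calc 1 / (1 - a n / 4 * vr n) ≤ rexp (2 * (a n / 4 * vr n)) := h2
      _ = rexp (a n * vr n / 2) := by ring_nf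
  -- moment bound
  have hmoment : ∀ m : ℕ,
      ∫⁻ ψ, ENNReal.ofReal
          (rexp ((∑ n ∈ Finset.Icc (-(m:ℤ)) (m:ℤ), a n * ‖ψ n‖ ^ 2) / 4)) ∂γ
        ≤ ENNReal.ofReal (rexp (T / 2)) := by
    intro m
    have hrw : ∀ ψ : ℤ → ℂ,
        ENNReal.ofReal (rexp ((∑ n ∈ Finset.Icc (-(m:ℤ)) (m:ℤ), a n * ‖ψ n‖ ^ 2) / 4))
        = ∏ n ∈ Finset.Icc (-(m:ℤ)) (m:ℤ), ENNReal.ofReal (rexp (a n / 4 * ‖ψ n‖ ^ 2)) := by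
      intro ψ
      rw [← ENNReal.ofReal_prod_of_nonneg (fun i _ => (Real.exp_pos _).le), ← Real.exp_sum,
        Finset.sum_div]
      exact congrArg (fun r => ENNReal.ofReal (rexp r)) (Finset.sum_congr rfl fun i _ => by ring)
    simp_rw [hrw]
    have hindcomp : iIndepFun
        (fun (n : ℤ) (ψ : ℤ → ℂ) => ENNReal.ofReal (rexp (a n / 4 * ‖ψ n‖ ^ 2))) γ := by
      have := hindep.comp
        (fun (n : ℤ) (z : ℂ) => ENNReal.ofReal (rexp (a n / 4 * ‖z‖ ^ 2)))
        (fun n => by fun_prop)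
      exact this
    rw [lintegral_prod_of_iIndepFun hFmeas hindcomp _]
    calc ∏ n ∈ Finset.Icc (-(m:ℤ)) (m:ℤ), ∫⁻ ψ, ENNReal.ofReal (rexp (a n / 4 * ‖ψ n‖ ^ 2)) ∂γ
        ≤ ∏ n ∈ Finset.Icc (-(m:ℤ)) (m:ℤ), ENNReal.ofReal (rexp (a n * vr n / 2)) :=
          Finset.prod_le_prod' (fun n _ => hfac n)
      _ = ENNReal.ofReal (rexp (∑ n ∈ Finset.Icc (-(m:ℤ)) (m:ℤ), a n * vr n / 2)) := by
          rw [← ENNReal.ofReal_prod_of_nonneg (fun i _ => (Real.exp_pos _).le), ← Real.exp_sum]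
      _ ≤ ENNReal.ofReal (rexp (T / 2)) := by
          apply ENNReal.ofReal_le_ofReal
          apply Real.exp_le_exp.2
          rw [← Finset.sum_div]
          apply div_le_div_of_nonneg_right ?_ (by norm_num)
          exact Summable.sum_le_tsum _ (fun n _ => mul_nonneg (ha n) (hvpos n).le) hsum
  -- Chernoff per m, then union
  set A : ℕ → Set (ℤ → ℂ) := fun m =>
    {ψ | t < ∑ n ∈ Finset.Icc (-(m:ℤ)) (m:ℤ), a n * ‖ψ n‖ ^ 2} with hA_def
  have hAmono : Monotone A := by
    intro m m' hmm ψ hψ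
    simp only [hA_def, Set.mem_setOf_eq] at hψ ⊢
    refine lt_of_lt_of_le hψ (Finset.sum_le_sum_of_subset_of_nonneg ?_ ?_)
    · exact Finset.Icc_subset_Icc (by exact_mod_cast neg_le_neg (Int.ofNat_le.2 hmm))
        (by exact_mod_cast hmm)
    · exact fun n _ _ => mul_nonneg (ha n) (sq_nonneg _)
  have hchern : ∀ m, γ (A m) ≤ ENNReal.ofReal (rexp (T / 2) * rexp (-t / 4)) := by
    intro m
    set f : (ℤ → ℂ) → ℝ≥0∞ := fun ψ =>
      ENNReal.ofReal (rexp ((∑ n ∈ Finset.Icc (-(m:ℤ)) (m:ℤ), a n * ‖ψ n‖ ^ 2) / 4)) with hf_def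
    have hfmeas : Measurable f := by
      apply Measurable.ennreal_ofReal
      apply Real.measurable_exp.comp
      apply Measurable.div_const
      exact Finset.measurable_sum _ (fun n _ => by fun_prop)
    have hsub : A m ⊆ {ψ | ENNReal.ofReal (rexp (t / 4)) ≤ f ψ} := by
      intro ψ hψ
      exact ENNReal.ofReal_le_ofReal (Real.exp_le_exp.2 (by
        have : t < ∑ n ∈ Finset.Icc (-(m:ℤ)) (m:ℤ), a n * ‖ψ n‖ ^ 2 := hψ
        linarith))
    have hmarkov := mul_meas_ge_le_lintegral₀ (μ := γ) hfmeas.aemeasurable (ENNReal.ofReal (rexp (t / 4)))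
    have hε0 : ENNReal.ofReal (rexp (t / 4)) ≠ 0 := by
      simp [ENNReal.ofReal_eq_zero, not_le, Real.exp_pos]
    have hεtop : ENNReal.ofReal (rexp (t / 4)) ≠ ⊤ := ENNReal.ofReal_ne_top
    have hstep : γ (A m) ≤ ENNReal.ofReal (rexp (T / 2)) / ENNReal.ofReal (rexp (t / 4)) := by
      rw [ENNReal.le_div_iff_mul_le (Or.inl hε0) (Or.inl hεtop), mul_comm]
      calc ENNReal.ofReal (rexp (t / 4)) * γ (A m)
          ≤ ENNReal.ofReal (rexp (t / 4)) * γ {ψ | ENNReal.ofReal (rexp (t / 4)) ≤ f ψ} :=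
            mul_le_mul_right (measure_mono hsub) _
        _ ≤ ∫⁻ ψ, f ψ ∂γ := hmarkov
        _ ≤ ENNReal.ofReal (rexp (T / 2)) := hmoment m
    refine hstep.trans_eq ?_
    rw [← ENNReal.ofReal_div_of_pos (Real.exp_pos _)]
    congr 1
    rw [div_eq_mul_inv, ← Real.exp_neg, neg_div]
  have hset : {ψ : ℤ → ℂ | ∃ m : ℕ,
      t < ∑ n ∈ Finset.Icc (-(m:ℤ)) (m:ℤ), |(n : ℝ)| ^ (2 * s) * ‖ψ n‖ ^ 2} = ⋃ m, A m := by
    ext ψ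
    simp [hA_def, Set.mem_iUnion, ha_def]
  rw [hset, Directed.measure_iUnion (hAmono.directed_le)]
  exact iSup_le hchern

/-- Proposition A.1 / Lemma A.3: for `s < k − 1/2` the `Ḣ^s` norm has exponential
tails under `γ_k`, and consequently `γ_k` is concentrated on
`⋂_{ε>0} Ḣ^{k−1/2−ε}`. -/
theorem gammaK_concentration (k : ℕ) (γ : Measure (ℤ → ℂ)) (hγ : IsGammaK k γ) :
    (∀ s : ℝ, s < (k : ℝ) - 1 / 2 → ∃ C : ℝ, 0 < C ∧ ∀ l : ℝ, 0 < l →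
      γ {ψ : ℤ → ℂ |
          l ≤ Real.sqrt (∑' n : ℤ, |(n : ℝ)| ^ (2 * s) * ‖ψ n‖ ^ 2)} ≤
        ENNReal.ofReal (C * Real.exp (-l / 4))) ∧
    γ (⋂ ε > (0:ℝ), {ψ : ℤ → ℂ |
        Summable (fun n : ℤ => |(n : ℝ)| ^ (2 * ((k : ℝ) - 1 / 2 - ε)) * ‖ψ n‖ ^ 2)}) = 1 := by
  have hprob : IsProbabilityMeasure γ := hγ.1
  have hIcc : ∀ u : Finset ℤ, ∃ m : ℕ, u ⊆ Finset.Icc (-(m:ℤ)) (m:ℤ) := by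
    intro u
    refine ⟨u.sup (fun n => n.natAbs), fun n hn => ?_⟩
    have h1 : n.natAbs ≤ u.sup (fun n => n.natAbs) := Finset.le_sup hn
    have h2 : |n| ≤ ((u.sup (fun n => n.natAbs) : ℕ) : ℤ) := by
      rw [Int.abs_eq_natAbs]
      exact_mod_cast h1
    rw [Finset.mem_Icc]
    exact ⟨neg_le_of_abs_le h2, le_of_abs_le h2⟩
  constructor
  · -- Part 1
    intro s hs
    obtain ⟨M, hM, hcore⟩ := gammaK_core k γ hγ s hs
    refine ⟨M * rexp 2, by positivity, fun l hl => ?_⟩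
    have hsub : {ψ : ℤ → ℂ | l ≤ Real.sqrt (∑' n : ℤ, |(n : ℝ)| ^ (2 * s) * ‖ψ n‖ ^ 2)}
        ⊆ {ψ : ℤ → ℂ | ∃ m : ℕ,
            l ^ 2 - 1 < ∑ n ∈ Finset.Icc (-(m:ℤ)) (m:ℤ), |(n : ℝ)| ^ (2 * s) * ‖ψ n‖ ^ 2} := by
      intro ψ hψ
      simp only [Set.mem_setOf_eq] at hψ ⊢
      set f : ℤ → ℝ := fun n => |(n : ℝ)| ^ (2 * s) * ‖ψ n‖ ^ 2 with hf_def
      have hfnn : ∀ n, 0 ≤ f n := fun n =>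
        mul_nonneg (Real.rpow_nonneg (abs_nonneg _) _) (sq_nonneg _)
      by_contra hcon
      push_neg at hcon
      have hall : ∀ u : Finset ℤ, ∑ n ∈ u, f n ≤ l ^ 2 - 1 := by
        intro u
        obtain ⟨m, hm⟩ := hIcc u
        exact le_trans (Finset.sum_le_sum_of_subset_of_nonneg hm (fun n _ _ => hfnn n)) (hcon m)
      have hsumf : Summable f := summable_of_sum_le (fun n => hfnn n) hall
      have htsum : ∑' n, f n ≤ l ^ 2 - 1 := Summable.tsum_le_of_sum_le hsumf hall
      have hl2 : l ^ 2 ≤ ∑' n, f n := (Real.le_sqrt hl.le (tsum_nonneg hfnn)).mp hψ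
      linarith
    calc γ {ψ : ℤ → ℂ | l ≤ Real.sqrt (∑' n : ℤ, |(n : ℝ)| ^ (2 * s) * ‖ψ n‖ ^ 2)}
        ≤ γ {ψ : ℤ → ℂ | ∃ m : ℕ,
            l ^ 2 - 1 < ∑ n ∈ Finset.Icc (-(m:ℤ)) (m:ℤ), |(n : ℝ)| ^ (2 * s) * ‖ψ n‖ ^ 2} :=
          measure_mono hsub
      _ ≤ ENNReal.ofReal (M * rexp (-(l ^ 2 - 1) / 4)) := hcore _
      _ ≤ ENNReal.ofReal (M * rexp 2 * rexp (-l / 4)) := by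
          apply ENNReal.ofReal_le_ofReal
          rw [mul_assoc, ← Real.exp_add]
          apply mul_le_mul_of_nonneg_left _ hM.le
          apply Real.exp_le_exp.2
          nlinarith [sq_nonneg (l - 1)]
  · -- Part 2
    set g : ℝ → (ℤ → ℂ) → ℤ → ℝ :=
      fun ε ψ n => |(n : ℝ)| ^ (2 * ((k : ℝ) - 1 / 2 - ε)) * ‖ψ n‖ ^ 2 with hg_def
    have hgnn : ∀ ε ψ n, 0 ≤ g ε ψ n := fun ε ψ n =>
      mul_nonneg (Real.rpow_nonneg (abs_nonneg _) _) (sq_nonneg _)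
    have hnull : ∀ ε : ℝ, 0 < ε → γ {ψ : ℤ → ℂ | ¬ Summable (g ε ψ)} = 0 := by
      intro ε hε
      obtain ⟨M, hM, hcore⟩ := gammaK_core k γ hγ ((k : ℝ) - 1 / 2 - ε) (by linarith)
      have hsub : ∀ t : ℝ, {ψ : ℤ → ℂ | ¬ Summable (g ε ψ)} ⊆ {ψ : ℤ → ℂ | ∃ m : ℕ,
          t < ∑ n ∈ Finset.Icc (-(m:ℤ)) (m:ℤ),
            |(n : ℝ)| ^ (2 * ((k : ℝ) - 1 / 2 - ε)) * ‖ψ n‖ ^ 2} := by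
        intro t ψ hψ
        simp only [Set.mem_setOf_eq] at hψ ⊢
        by_contra hcon
        push_neg at hcon
        refine hψ (summable_of_sum_le (c := t) (fun n => hgnn ε ψ n) ?_)
        intro u
        obtain ⟨m, hm⟩ := hIcc u
        exact le_trans (Finset.sum_le_sum_of_subset_of_nonneg hm
          (fun n _ _ => hgnn ε ψ n)) (hcon m)
      have hb : ∀ j : ℕ, γ {ψ : ℤ → ℂ | ¬ Summable (g ε ψ)}
          ≤ ENNReal.ofReal (M * rexp (-(j:ℝ) / 4)) :=
        fun j => le_trans (measure_mono (hsub j)) (hcore j)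
      have hexp : ∀ j : ℕ, rexp (-(j:ℝ) / 4) = rexp (-1/4) ^ j := by
        intro j
        rw [← Real.exp_nat_mul]
        congr 1
        ring
      have hlim : Filter.Tendsto (fun j : ℕ => ENNReal.ofReal (M * rexp (-(j:ℝ) / 4)))
          Filter.atTop (nhds 0) := by
        rw [show (0:ℝ≥0∞) = ENNReal.ofReal (M * 0) by simp]
        apply ENNReal.tendsto_ofReal
        apply Filter.Tendsto.const_mul
        simp_rw [hexp]
        exact tendsto_pow_atTop_nhds_zero_of_lt_one (Real.exp_pos _).le
          (Real.exp_lt_one_iff.mpr (by norm_num))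
      exact le_antisymm (ge_of_tendsto hlim (Filter.Eventually.of_forall hb)) zero_le
    have hcompl : (⋂ ε > (0:ℝ), {ψ : ℤ → ℂ | Summable (g ε ψ)})ᶜ
        ⊆ ⋃ j : ℕ, {ψ : ℤ → ℂ | ¬ Summable (g (1 / ((j:ℝ) + 1)) ψ)} := by
      intro ψ hψ
      simp only [Set.mem_compl_iff, Set.mem_iInter, Set.mem_setOf_eq, not_forall] at hψ
      obtain ⟨ε, hε, hns⟩ := hψ
      obtain ⟨j, hj⟩ := exists_nat_one_div_lt hε
      refine Set.mem_iUnion.2 ⟨j, fun hsumm => hns ?_⟩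
      have hje : (0:ℝ) < 1 / ((j:ℝ) + 1) := by positivity
      refine summable_of_le_off_zero (fun n => hgnn ε ψ n)
        (fun n => hgnn _ ψ n) hsumm ?_
      intro n hn
      have h1n : (1:ℝ) ≤ |(n:ℝ)| := by
        have : (1:ℤ) ≤ |n| := Int.one_le_abs hn
        calc (1:ℝ) ≤ ((|n| : ℤ) : ℝ) := by exact_mod_cast this
          _ = |(n:ℝ)| := by push_cast; ring
      exact mul_le_mul_of_nonneg_right
        (Real.rpow_le_rpow_of_exponent_le h1n (by nlinarith [hj.le])) (sq_nonneg _)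
    have hz : γ ((⋂ ε > (0:ℝ), {ψ : ℤ → ℂ | Summable (g ε ψ)})ᶜ) = 0 := by
      refine le_antisymm ?_ zero_le
      refine le_trans (measure_mono hcompl) ?_
      refine le_trans (measure_iUnion_le _) ?_
      have : ∀ j : ℕ, γ {ψ : ℤ → ℂ | ¬ Summable (g (1 / ((j:ℝ) + 1)) ψ)} = 0 :=
        fun j => hnull _ (by positivity)
      simp only [one_div] at this
      simp [this]
    have hone : (1:ℝ≥0∞) ≤ γ (⋂ ε > (0:ℝ), {ψ : ℤ → ℂ | Summable (g ε ψ)}) := by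
      have hu := measure_union_le (μ := γ)
        (⋂ ε > (0:ℝ), {ψ : ℤ → ℂ | Summable (g ε ψ)})
        ((⋂ ε > (0:ℝ), {ψ : ℤ → ℂ | Summable (g ε ψ)})ᶜ)
      rw [Set.union_compl_self, measure_univ, hz, add_zero] at hu
      exact hu
    exact le_antisymm prob_le_one hone
end
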